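/- If K ≤ 0, then for every real φ ∈ L²(I) one has ⟨𝓛φ, φ⟩ ≤ −(p/2)∫₀¹∫₀¹ (φ(x) − φ(y))² dx dy ≤ 0, and ⟨𝓛φ, φ⟩ < 0 unless φ is almost everywhere equal to a constant. In particular, for K ≤ 0 the linearization 𝓛 of the continuum limit about the stationary solution u ≡ 0 is negative semidefinite, with kernel consisting exactly of the constant functions. -/

import Mathlib

open MeasureTheory Real Set

noncomputable section

/-- The Lebesgue measure restricted to the interval `I = [0,1]`. -/
def μI : MeasureTheory.Measure ℝ := MeasureTheory.volume.restrict (Set.Icc (0:ℝ) 1)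

/-- The graphon of the `κ`-nearest neighbor graph. -/
def W2 (κ : ℝ) (x y : ℝ) : ℝ := if |x - y| ≤ κ ∨ 1 - κ ≤ |x - y| then 1 else 0

/-- The linearization `𝓛` of the continuum limit about the stationary solution `u ≡ 0`:
`(𝓛φ)(x) = ∫₀¹ (p - 2K·W₂(x,y))(φ(y) - φ(x)) dy`. -/
def Lop (p K κ : ℝ) (φ : ℝ → ℝ) (x : ℝ) : ℝ :=
  ∫ y in Set.Icc (0:ℝ) 1, (p - 2 * K * W2 κ x y) * (φ y - φ x)

instance : IsFiniteMeasure μI := by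
  constructor
  simp [μI]

lemma μI_ne_zero : μI ≠ 0 := by
  intro h
  have : μI (Set.Icc (0:ℝ) 1) = 1 := by
    simp [μI, Measure.restrict_apply, measurableSet_Icc]
  rw [h] at this
  simp at this

lemma W2_nonneg (κ x y : ℝ) : 0 ≤ W2 κ x y := by
  unfold W2; split <;> norm_num

lemma W2_le_one (κ x y : ℝ) : W2 κ x y ≤ 1 := by
  unfold W2; split <;> norm_num

lemma W2_symm (κ x y : ℝ) : W2 κ x y = W2 κ y x := by
  unfold W2; rw [abs_sub_comm]

lemma coef_nonneg {p K : ℝ} (hp : 0 < p) (hK : K ≤ 0) (κ x y : ℝ) :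
    p ≤ p - 2 * K * W2 κ x y := by
  nlinarith [W2_nonneg κ x y]

lemma coef_abs_le {p K : ℝ} (hp : 0 < p) (κ x y : ℝ) :
    |p - 2 * K * W2 κ x y| ≤ p + 2 * |K| := by
  have h1 := W2_nonneg κ x y
  have h2 := W2_le_one κ x y
  rw [abs_le]
  constructor <;> cases abs_cases K <;> nlinarith

lemma measurable_W2 (κ : ℝ) : Measurable (fun z : ℝ × ℝ => W2 κ z.1 z.2) := by
  unfold W2
  apply Measurable.ite _ measurable_const measurable_const
  have h : Measurable (fun z : ℝ × ℝ => |z.1 - z.2|) :=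
    (measurable_fst.sub measurable_snd).abs
  have : {z : ℝ × ℝ | |z.1 - z.2| ≤ κ ∨ 1 - κ ≤ |z.1 - z.2|}
      = (fun z : ℝ × ℝ => |z.1 - z.2|) ⁻¹' (Set.Iic κ ∪ Set.Ici (1 - κ)) := by
    ext z; simp [Set.mem_union]
  rw [this]
  exact h (measurableSet_Iic.union measurableSet_Ici)

theorem aux (κ p K : ℝ) (hp : 0 < p) (hK : K ≤ 0)
    (ψ : ℝ → ℝ) (hm : StronglyMeasurable ψ) (hψ : MeasureTheory.MemLp ψ 2 μI) :
    ((∫ x in Set.Icc (0:ℝ) 1, Lop p K κ ψ x * ψ x)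
      ≤ -(p/2) * ∫ x in Set.Icc (0:ℝ) 1, ∫ y in Set.Icc (0:ℝ) 1, (ψ x - ψ y) ^ 2) ∧
    (-(p/2) * (∫ x in Set.Icc (0:ℝ) 1, ∫ y in Set.Icc (0:ℝ) 1, (ψ x - ψ y) ^ 2) ≤ 0) ∧
    ((¬ ∃ c : ℝ, ψ =ᵐ[μI] fun _ => c) →
      (∫ x in Set.Icc (0:ℝ) 1, Lop p K κ ψ x * ψ x) < 0) ∧
    (((fun x => Lop p K κ ψ x) =ᵐ[μI] fun _ => (0:ℝ)) ↔ ∃ c : ℝ, ψ =ᵐ[μI] fun _ => c) := by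
  have hmeas : Measurable ψ := hm.measurable
  set ν : Measure (ℝ × ℝ) := μI.prod μI with hν
  have hInt1 : Integrable ψ μI := hψ.integrable one_le_two
  have hIntSq : Integrable (fun x => ψ x ^ 2) μI := hψ.integrable_sq
  have hIntProd : Integrable (fun z : ℝ × ℝ => ψ z.1 * ψ z.2) ν :=
    hInt1.mul_prod hInt1
  have hIntSq1 : Integrable (fun z : ℝ × ℝ => ψ z.1 ^ 2) ν := by
    have := hIntSq.mul_prod (integrable_const (μ := μI) (1:ℝ))
    simpa using this
  have hIntSq2 : Integrable (fun z : ℝ × ℝ => ψ z.2 ^ 2) ν := by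
    have := (integrable_const (μ := μI) (1:ℝ)).mul_prod hIntSq
    simpa using this
  have hIntD : Integrable (fun z : ℝ × ℝ => (ψ z.1 - ψ z.2) ^ 2) ν := by
    have h : (fun z : ℝ × ℝ => (ψ z.1 - ψ z.2) ^ 2)
        = fun z => ψ z.1 ^ 2 + ψ z.2 ^ 2 - 2 * (ψ z.1 * ψ z.2) := by
      funext z; ring
    rw [h]
    exact (hIntSq1.add hIntSq2).sub (hIntProd.const_mul 2)
  -- the integrand F
  set F : ℝ × ℝ → ℝ :=
    fun z => (p - 2 * K * W2 κ z.1 z.2) * (ψ z.2 - ψ z.1) * ψ z.1 with hF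
  set G : ℝ × ℝ → ℝ :=
    fun z => (p - 2 * K * W2 κ z.1 z.2) * (ψ z.1 - ψ z.2) ^ 2 with hG
  have hFmeas : Measurable F := by
    apply Measurable.mul
    apply Measurable.mul
    · exact (measurable_const.sub ((measurable_W2 κ).const_mul (2 * K)))
    · exact (hmeas.comp measurable_snd).sub (hmeas.comp measurable_fst)
    · exact hmeas.comp measurable_fst
  have hGmeas : Measurable G := by
    apply Measurable.mul
    · exact (measurable_const.sub ((measurable_W2 κ).const_mul (2 * K)))
    · exact ((hmeas.comp measurable_fst).sub (hmeas.comp measurable_snd)).pow measurable_const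
  have hIntF : Integrable F ν := by
    apply Integrable.mono'
      (g := fun z => (p + 2 * |K|) * (|ψ z.1 * ψ z.2| + ψ z.1 ^ 2))
      ((hIntProd.abs.add hIntSq1).const_mul _) hFmeas.aestronglyMeasurable
    filter_upwards with z
    have h1 := coef_abs_le (K := K) hp κ z.1 z.2
    have h2 : 0 ≤ |K| := abs_nonneg K
    have h3 : |ψ z.2 - ψ z.1| * |ψ z.1| ≤ |ψ z.1 * ψ z.2| + ψ z.1 ^ 2 := by
      rw [abs_mul]
      have := abs_sub (ψ z.2) (ψ z.1)
      have h4 : |ψ z.2 - ψ z.1| ≤ |ψ z.2| + |ψ z.1| := abs_sub _ _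
      have h5 : |ψ z.1| ^ 2 = ψ z.1 ^ 2 := sq_abs _
      nlinarith [abs_nonneg (ψ z.1), abs_nonneg (ψ z.2)]
    have hc0 : (0:ℝ) ≤ |p - 2 * K * W2 κ z.1 z.2| := abs_nonneg _
    calc ‖F z‖ = |p - 2 * K * W2 κ z.1 z.2| * (|ψ z.2 - ψ z.1| * |ψ z.1|) := by
          simp [hF, Real.norm_eq_abs, abs_mul, mul_assoc]
      _ ≤ (p + 2 * |K|) * (|ψ z.1 * ψ z.2| + ψ z.1 ^ 2) := by
          apply mul_le_mul h1 h3 (by positivity) (by linarith)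
  have hIntG : Integrable G ν := by
    apply Integrable.mono' (g := fun z => (p + 2 * |K|) * (ψ z.1 - ψ z.2) ^ 2)
      (hIntD.const_mul _) hGmeas.aestronglyMeasurable
    filter_upwards with z
    have h1 := coef_abs_le (K := K) hp κ z.1 z.2
    have : ‖G z‖ = |p - 2 * K * W2 κ z.1 z.2| * (ψ z.1 - ψ z.2) ^ 2 := by
      simp [hG, Real.norm_eq_abs, abs_mul, abs_of_nonneg (sq_nonneg (ψ z.1 - ψ z.2))]
    rw [this]
    exact mul_le_mul_of_nonneg_right h1 (sq_nonneg _)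
  -- key identity: ⟨Lψ, ψ⟩ = ∫ F
  have key1 : (∫ x in Set.Icc (0:ℝ) 1, Lop p K κ ψ x * ψ x) = ∫ z, F z ∂ν := by
    have step : ∀ x, Lop p K κ ψ x * ψ x
        = ∫ y in Set.Icc (0:ℝ) 1, (p - 2 * K * W2 κ x y) * (ψ y - ψ x) * ψ x := by
      intro x
      unfold Lop
      rw [← integral_mul_const]
    rw [integral_congr_ae (Filter.Eventually.of_forall step)]
    exact integral_integral (f := fun x y => (p - 2 * K * W2 κ x y) * (ψ y - ψ x) * ψ x) hIntF
  -- symmetrization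
  have key2 : ∫ z, F z ∂ν = -(1/2) * ∫ z, G z ∂ν := by
    have hswap : ∫ z, F z ∂ν = ∫ z, F z.swap ∂ν := (integral_prod_swap F).symm
    have hcomb : ∀ z : ℝ × ℝ, F z + F z.swap = - G z := by
      intro z
      simp only [hF, hG, Prod.fst_swap, Prod.snd_swap]
      rw [W2_symm κ z.2 z.1]
      ring
    have h2 : (2:ℝ) * ∫ z, F z ∂ν = ∫ z, (F z + F z.swap) ∂ν := by
      have hadd : ∫ z, (F z + F z.swap) ∂ν = (∫ z, F z ∂ν) + ∫ z, F z.swap ∂ν :=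
        integral_add hIntF hIntF.swap
      rw [hadd, ← hswap]; ring
    have h3 : ∫ z, (F z + F z.swap) ∂ν = - ∫ z, G z ∂ν := by
      rw [← integral_neg]
      exact integral_congr_ae (Filter.Eventually.of_forall fun z => hcomb z)
    linarith
  -- bound ∫ G ≥ p ∫ d²
  have key3 : p * ∫ z, (ψ z.1 - ψ z.2) ^ 2 ∂ν ≤ ∫ z, G z ∂ν := by
    rw [← integral_const_mul]
    apply integral_mono (hIntD.const_mul p) hIntG
    intro z
    exact mul_le_mul_of_nonneg_right (coef_nonneg hp hK κ z.1 z.2) (sq_nonneg _)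
  have key4 : (∫ x in Set.Icc (0:ℝ) 1, ∫ y in Set.Icc (0:ℝ) 1, (ψ x - ψ y) ^ 2)
      = ∫ z, (ψ z.1 - ψ z.2) ^ 2 ∂ν :=
    integral_integral (f := fun x y => (ψ x - ψ y) ^ 2) hIntD
  have hDnonneg : 0 ≤ ∫ z, (ψ z.1 - ψ z.2) ^ 2 ∂ν :=
    integral_nonneg fun z => sq_nonneg _
  have part1 : (∫ x in Set.Icc (0:ℝ) 1, Lop p K κ ψ x * ψ x)
      ≤ -(p/2) * ∫ x in Set.Icc (0:ℝ) 1, ∫ y in Set.Icc (0:ℝ) 1, (ψ x - ψ y) ^ 2 := by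
    rw [key1, key2, key4]
    linarith
  have part2 : -(p/2) * (∫ x in Set.Icc (0:ℝ) 1, ∫ y in Set.Icc (0:ℝ) 1, (ψ x - ψ y) ^ 2) ≤ 0 := by
    rw [key4]
    nlinarith
  -- zero double integral implies a.e. constant
  have const_of : (∫ z, (ψ z.1 - ψ z.2) ^ 2 ∂ν) = 0 → ∃ c : ℝ, ψ =ᵐ[μI] fun _ => c := by
    intro h0
    have hae : (fun z : ℝ × ℝ => (ψ z.1 - ψ z.2) ^ 2) =ᵐ[ν] 0 :=
      (integral_eq_zero_iff_of_nonneg (fun z => sq_nonneg _) hIntD).1 h0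
    have hS : MeasurableSet {z : ℝ × ℝ | ¬ ψ z.1 = ψ z.2} :=
      ((measurableSet_eq_fun (hmeas.comp measurable_fst) (hmeas.comp measurable_snd))).compl
    have hnull : ν {z : ℝ × ℝ | ¬ ψ z.1 = ψ z.2} = 0 := by
      have : {z : ℝ × ℝ | ¬ ψ z.1 = ψ z.2} ⊆ {z | ¬ ((fun z : ℝ × ℝ => (ψ z.1 - ψ z.2) ^ 2) z = (0 : (ℝ×ℝ) → ℝ) z)} := by
        intro z hz
        simp only [Set.mem_setOf_eq, Pi.zero_apply] at *
        intro hc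
        exact hz (by nlinarith [sq_nonneg (ψ z.1 - ψ z.2)])
      exact measure_mono_null this hae
    rw [hν, Measure.measure_prod_null hS] at hnull
    haveI : (ae μI).NeBot := ae_neBot.2 μI_ne_zero
    obtain ⟨x₀, hx₀⟩ := hnull.exists
    refine ⟨ψ x₀, ?_⟩
    have : μI {y | ¬ ψ y = ψ x₀} = 0 := by
      have heq : (Prod.mk x₀ ⁻¹' {z : ℝ × ℝ | ¬ ψ z.1 = ψ z.2}) = {y | ¬ ψ x₀ = ψ y} := rfl
      have := hx₀
      simp only [Pi.zero_apply] at this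
      rw [heq] at this
      convert this using 2
      ext y; simp [eq_comm]
    exact this
  -- strict negativity
  have part3 : (¬ ∃ c : ℝ, ψ =ᵐ[μI] fun _ => c) →
      (∫ x in Set.Icc (0:ℝ) 1, Lop p K κ ψ x * ψ x) < 0 := by
    intro hnc
    have hpos : 0 < ∫ z, (ψ z.1 - ψ z.2) ^ 2 ∂ν := by
      rcases lt_or_eq_of_le hDnonneg with h | h
      · exact h
      · exact absurd (const_of h.symm) hnc
    calc (∫ x in Set.Icc (0:ℝ) 1, Lop p K κ ψ x * ψ x)
        ≤ -(p/2) * ∫ x in Set.Icc (0:ℝ) 1, ∫ y in Set.Icc (0:ℝ) 1, (ψ x - ψ y) ^ 2 := part1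
      _ < 0 := by rw [key4]; nlinarith
  refine ⟨part1, part2, part3, ?_⟩
  constructor
  · intro hker
    by_contra hnc
    have hz : (∫ x in Set.Icc (0:ℝ) 1, Lop p K κ ψ x * ψ x) = 0 := by
      have h0 : (∫ x, Lop p K κ ψ x * ψ x ∂μI) = ∫ _, (0:ℝ) ∂μI :=
        integral_congr_ae (hker.mono fun x hx => by
          simp only at hx; simp [hx])
      simpa [μI] using h0
    have := part3 hnc
    linarith
  · rintro ⟨c, hc⟩
    filter_upwards [hc] with x hx
    unfold Lop
    have h0 : (∫ y, (p - 2 * K * W2 κ x y) * (ψ y - ψ x) ∂μI) = ∫ _, (0:ℝ) ∂μI :=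
      integral_congr_ae (hc.mono fun y hy => by
        simp only at hy; simp [hy, hx])
    simpa [μI] using h0


/-- For `K ≤ 0` the operator `𝓛` is negative semidefinite:
`⟨𝓛φ, φ⟩ ≤ -(p/2)∫∫(φ(x) - φ(y))² dx dy ≤ 0`, with `⟨𝓛φ, φ⟩ < 0` unless `φ` is a.e. constant;
moreover the kernel of `𝓛` consists exactly of the (a.e.) constant functions. -/
theorem Lop_negative_semidefinite
    (κ p K : ℝ) (hκ : κ ∈ Set.Ioo (0:ℝ) (1/2)) (hp : 0 < p) (hK : K ≤ 0)
    (φ : ℝ → ℝ) (hφ : MeasureTheory.MemLp φ 2 μI) :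
    ((∫ x in Set.Icc (0:ℝ) 1, Lop p K κ φ x * φ x)
      ≤ -(p/2) * ∫ x in Set.Icc (0:ℝ) 1, ∫ y in Set.Icc (0:ℝ) 1, (φ x - φ y) ^ 2) ∧
    (-(p/2) * (∫ x in Set.Icc (0:ℝ) 1, ∫ y in Set.Icc (0:ℝ) 1, (φ x - φ y) ^ 2) ≤ 0) ∧
    ((¬ ∃ c : ℝ, φ =ᵐ[μI] fun _ => c) →
      (∫ x in Set.Icc (0:ℝ) 1, Lop p K κ φ x * φ x) < 0) ∧
    (((fun x => Lop p K κ φ x) =ᵐ[μI] fun _ => (0:ℝ)) ↔ ∃ c : ℝ, φ =ᵐ[μI] fun _ => c) := by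
  set ψ : ℝ → ℝ := hφ.aestronglyMeasurable.mk φ with hψdef
  have hm : StronglyMeasurable ψ := hφ.aestronglyMeasurable.stronglyMeasurable_mk
  have heq : φ =ᵐ[μI] ψ := hφ.aestronglyMeasurable.ae_eq_mk
  have hψ : MeasureTheory.MemLp ψ 2 μI := hφ.ae_eq heq
  obtain ⟨h1, h2, h3, h4⟩ := aux κ p K hp hK ψ hm hψ
  -- transfer lemmas
  have tL : ∀ᵐ x ∂μI, Lop p K κ φ x = Lop p K κ ψ x := by
    filter_upwards [heq] with x hx
    unfold Lop
    apply integral_congr_ae (μ := μI)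
    filter_upwards [heq] with y hy
    rw [hy, hx]
  have tI : (∫ x in Set.Icc (0:ℝ) 1, Lop p K κ φ x * φ x)
      = ∫ x in Set.Icc (0:ℝ) 1, Lop p K κ ψ x * ψ x := by
    apply integral_congr_ae (μ := μI)
    filter_upwards [tL, heq] with x hx1 hx2
    rw [hx1, hx2]
  have tD : (∫ x in Set.Icc (0:ℝ) 1, ∫ y in Set.Icc (0:ℝ) 1, (φ x - φ y) ^ 2)
      = ∫ x in Set.Icc (0:ℝ) 1, ∫ y in Set.Icc (0:ℝ) 1, (ψ x - ψ y) ^ 2 := by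
    apply integral_congr_ae (μ := μI)
    filter_upwards [heq] with x hx
    apply integral_congr_ae (μ := μI)
    filter_upwards [heq] with y hy
    rw [hx, hy]
  have tC : (∃ c : ℝ, φ =ᵐ[μI] fun _ => c) ↔ ∃ c : ℝ, ψ =ᵐ[μI] fun _ => c := by
    constructor
    · rintro ⟨c, hc⟩; exact ⟨c, heq.symm.trans hc⟩
    · rintro ⟨c, hc⟩; exact ⟨c, heq.trans hc⟩
  have tK : ((fun x => Lop p K κ φ x) =ᵐ[μI] fun _ => (0:ℝ))
      ↔ ((fun x => Lop p K κ ψ x) =ᵐ[μI] fun _ => (0:ℝ)) := by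
    constructor
    · intro h
      exact Filter.EventuallyEq.trans
        (Filter.EventuallyEq.symm (tL : (fun x => Lop p K κ φ x) =ᵐ[μI] fun x => Lop p K κ ψ x)) h
    · intro h
      exact Filter.EventuallyEq.trans
        (tL : (fun x => Lop p K κ φ x) =ᵐ[μI] fun x => Lop p K κ ψ x) h
  refine ⟨?_, ?_, ?_, ?_⟩
  · rw [tI, tD]; exact h1
  · rw [tD]; exact h2
  · intro hnc
    rw [tI]
    exact h3 (fun hc => hnc (tC.2 hc))
  · rw [tK, tC]
    exact h4
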